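/- If w is a function on ℝ^n that belongs to the Morrey-Campanato class 𝔏^{α,p}(ℝ^n) with 1 ≤ p ≤ n/α, then the function W(x,t) := w(x), viewed as a function on ℝ^{n+1}, belongs to 𝔏^{α,p}(ℝ^{n+1}), with ‖W‖_{𝔏^{α,p}(ℝ^{n+1})} ≤ C ‖w‖_{𝔏^{α,p}(ℝ^n)}. -/

import Mathlib

open MeasureTheory ENNReal

noncomputable section

/-- A cube in `ℝⁿ` with center `c` and side length `r`. -/
def cube (n : ℕ) (c : EuclideanSpace ℝ (Fin n)) (r : ℝ) : Set (EuclideanSpace ℝ (Fin n)) :=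
  {x | ∀ i, |x i - c i| ≤ r / 2}

/-- The Morrey–Campanato norm `sup_Q |Q|^{α/n} (|Q|^{-1} ∫_Q |f|^p)^{1/p}`. -/
def morreyNorm (n : ℕ) (α p : ℝ) (f : EuclideanSpace ℝ (Fin n) → ℝ) : ℝ≥0∞ :=
  ⨆ (c : EuclideanSpace ℝ (Fin n)) (r : ℝ) (_ : 0 < r),
    ENNReal.ofReal (r ^ α) * (ENNReal.ofReal (r ^ (n : ℝ)))⁻¹ ^ (1 / p) *
      (∫⁻ x in cube n c r, ENNReal.ofReal (|f x| ^ p)) ^ (1 / p)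

lemma lintegral_snd_prod_le {α β : Type*} [MeasurableSpace α] [MeasurableSpace β]
    (μ : Measure α) (ν : Measure β) [SFinite μ] [SFinite ν] (h : β → ℝ≥0∞) :
    ∫⁻ z, h z.2 ∂(μ.prod ν) ≤ μ Set.univ * ∫⁻ y, h y ∂ν := by
  rw [MeasureTheory.lintegral_def]
  refine iSup₂_le fun g hg => ?_
  rw [← SimpleFunc.lintegral_eq_lintegral,
    MeasureTheory.lintegral_prod _ g.measurable.aemeasurable]
  calc ∫⁻ x, ∫⁻ y, g (x, y) ∂ν ∂μ
      ≤ ∫⁻ _, (∫⁻ y, h y ∂ν) ∂μ :=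
        lintegral_mono fun x => lintegral_mono fun y => hg (x, y)
    _ = (∫⁻ y, h y ∂ν) * μ Set.univ := lintegral_const _
    _ = _ := mul_comm _ _

lemma key (n : ℕ) (c : EuclideanSpace ℝ (Fin (n + 1))) (r : ℝ)
    (g : EuclideanSpace ℝ (Fin n) → ℝ≥0∞) :
    (∫⁻ x in cube (n + 1) c r, g (WithLp.toLp 2 (fun i : Fin n => x i.castSucc))) ≤
      ENNReal.ofReal r *
        ∫⁻ y in cube n (WithLp.toLp 2 (fun i : Fin n => c i.castSucc)) r, g y := by
  set F : EuclideanSpace ℝ (Fin (n + 1)) → ℝ≥0∞ :=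
    fun x => g (WithLp.toLp 2 (fun i : Fin n => x i.castSucc)) with hF
  set E : (ℝ × (Fin n → ℝ)) ≃ᵐ EuclideanSpace ℝ (Fin (n + 1)) :=
    (MeasurableEquiv.piFinSuccAbove (fun _ : Fin (n + 1) => ℝ) (Fin.last n)).symm.trans
      (MeasurableEquiv.toLp 2 (Fin (n + 1) → ℝ)) with hEdef
  have hE : MeasurePreserving E volume volume :=
    ((EuclideanSpace.volume_preserving_symm_measurableEquiv_toLp (Fin (n + 1))).symm).comp
      ((volume_preserving_piFinSuccAbove (fun _ : Fin (n + 1) => ℝ) (Fin.last n)).symm)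
  have hEcoord : ∀ (t : ℝ) (y : Fin n → ℝ) (i : Fin (n + 1)),
      (E (t, y)) i = Fin.insertNth (α := fun _ => ℝ) (Fin.last n) t y i := fun t y i => rfl
  have h1 : ∫⁻ x in cube (n + 1) c r, F x =
      ∫⁻ z in E ⁻¹' (cube (n + 1) c r), F (E z) ∂volume :=
    (hE.setLIntegral_comp_preimage_emb E.measurableEmbedding F _).symm
  set I : Set ℝ := Metric.closedBall (c (Fin.last n)) (r / 2) with hI
  set S : Set (Fin n → ℝ) := {y | ∀ j, |y j - c j.castSucc| ≤ r / 2} with hS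
  have hpre : E ⁻¹' (cube (n + 1) c r) = I ×ˢ S := by
    ext ⟨t, y⟩
    simp only [Set.mem_preimage, cube, Set.mem_setOf_eq, Set.mem_prod, hI, hS,
      Metric.mem_closedBall, Real.dist_eq]
    rw [Fin.forall_iff_succAbove (Fin.last n)]
    simp only [hEcoord, Fin.insertNth_apply_same, Fin.insertNth_apply_succAbove]
    exact and_congr Iff.rfl (forall_congr' fun i => by rw [Fin.succAbove_last])
  have hFE : ∀ t y, F (E (t, y)) = g (WithLp.toLp 2 (fun i : Fin n => y i)) := by
    intro t y
    simp only [hF]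
    congr 2
    funext i
    rw [hEcoord, show (i.castSucc : Fin (n + 1)) = (Fin.last n).succAbove i by
      rw [Fin.succAbove_last], Fin.insertNth_apply_succAbove]
  have h2 : (∫⁻ z in E ⁻¹' (cube (n + 1) c r), F (E z) ∂volume) ≤
      volume I * ∫⁻ y in S, g (WithLp.toLp 2 (fun i : Fin n => y i)) := by
    rw [hpre]
    calc ∫⁻ z in I ×ˢ S, F (E z) ∂volume
        = ∫⁻ z in I ×ˢ S, g (WithLp.toLp 2 (fun i : Fin n => z.2 i)) ∂volume := by
          refine lintegral_congr fun z => ?_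
          obtain ⟨t, y⟩ := z
          exact hFE t y
      _ = ∫⁻ z, g (WithLp.toLp 2 (fun i : Fin n => z.2 i))
            ∂((volume.restrict I).prod (volume.restrict S)) := by
          rw [Measure.prod_restrict, ← Measure.volume_eq_prod]
      _ ≤ (volume.restrict I) Set.univ *
            ∫⁻ y, g (WithLp.toLp 2 (fun i : Fin n => y i)) ∂(volume.restrict S) :=
          lintegral_snd_prod_le _ _ _
      _ = volume I * ∫⁻ y in S, g (WithLp.toLp 2 (fun i : Fin n => y i)) := by
          rw [Measure.restrict_apply_univ]
  have h3 : (∫⁻ y in S, g (WithLp.toLp 2 (fun i : Fin n => y i))) =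
      ∫⁻ x in cube n (WithLp.toLp 2 (fun i : Fin n => c i.castSucc)) r, g x := by
    have hS' : (MeasurableEquiv.toLp 2 (Fin n → ℝ)) ⁻¹'
        (cube n (WithLp.toLp 2 (fun i : Fin n => c i.castSucc)) r) = S := rfl
    have := MeasurePreserving.setLIntegral_comp_preimage_emb
      ((EuclideanSpace.volume_preserving_symm_measurableEquiv_toLp (Fin n)).symm)
      (MeasurableEquiv.toLp 2 (Fin n → ℝ)).measurableEmbedding g
      (cube n (WithLp.toLp 2 (fun i : Fin n => c i.castSucc)) r)
    rw [MeasurableEquiv.symm_symm, hS'] at this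
    exact this
  have hvolI : volume I = ENNReal.ofReal r := by
    rw [hI, Real.volume_closedBall]
    congr 1
    ring
  calc ∫⁻ x in cube (n + 1) c r, F x
      ≤ volume I * ∫⁻ y in S, g (WithLp.toLp 2 (fun i : Fin n => y i)) := h1 ▸ h2
    _ = ENNReal.ofReal r * ∫⁻ x in cube n (WithLp.toLp 2 (fun i : Fin n => c i.castSucc)) r, g x := by
        rw [hvolI, h3]

/-- If `w ∈ 𝔏^{α,p}(ℝⁿ)` then `W(x,t) := w(x)`, viewed on `ℝ^{n+1}`, belongs to
`𝔏^{α,p}(ℝ^{n+1})` with `‖W‖ ≤ C‖w‖`. -/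
theorem morrey_time_independent (n : ℕ) (α p : ℝ) (hα : 0 < α) (hp1 : 1 ≤ p)
    (hp2 : p ≤ n / α) :
    ∃ C > (0:ℝ), ∀ w : EuclideanSpace ℝ (Fin n) → ℝ,
      morreyNorm (n + 1) α p
          (fun x : EuclideanSpace ℝ (Fin (n + 1)) => w (WithLp.toLp 2 (fun i : Fin n => x i.castSucc))) ≤
        ENNReal.ofReal C * morreyNorm n α p w := by
  refine ⟨1, one_pos, fun w => ?_⟩
  rw [ENNReal.ofReal_one, one_mul, morreyNorm]
  refine iSup_le fun c => iSup_le fun r => iSup_le fun hr => ?_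
  have hp0 : (0:ℝ) < p := lt_of_lt_of_le one_pos hp1
  have h1p : (0:ℝ) ≤ 1 / p := by positivity
  set c' : EuclideanSpace ℝ (Fin n) := (WithLp.toLp 2 (fun i : Fin n => c i.castSucc)) with hc'
  set J := ∫⁻ x in cube n c' r, ENNReal.ofReal (|w x| ^ p) with hJ
  set a := ENNReal.ofReal (r ^ (n : ℝ)) with ha
  set b := ENNReal.ofReal r with hb
  have ha0 : a ≠ 0 := by
    rw [ha, ne_eq, ENNReal.ofReal_eq_zero, not_le]
    exact Real.rpow_pos_of_pos hr _
  have hat : a ≠ ⊤ := ENNReal.ofReal_ne_top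
  have hb0 : b ≠ 0 := by simp [hb, ENNReal.ofReal_eq_zero, not_le, hr]
  have hbt : b ≠ ⊤ := ENNReal.ofReal_ne_top
  have hsplit : ENNReal.ofReal (r ^ ((n + 1 : ℕ) : ℝ)) = a * b := by
    rw [ha, hb, ← ENNReal.ofReal_mul (Real.rpow_nonneg hr.le _)]
    congr 1
    push_cast
    rw [Real.rpow_add hr, Real.rpow_one]
  have hkey := key n c r (fun x => ENNReal.ofReal (|w x| ^ p))
  calc ENNReal.ofReal (r ^ α) * (ENNReal.ofReal (r ^ ((n + 1 : ℕ) : ℝ)))⁻¹ ^ (1 / p) *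
        (∫⁻ x in cube (n + 1) c r,
          ENNReal.ofReal (|w (WithLp.toLp 2 (fun i : Fin n => x i.castSucc))| ^ p)) ^ (1 / p)
      ≤ ENNReal.ofReal (r ^ α) * ((a * b)⁻¹) ^ (1 / p) * (b * J) ^ (1 / p) := by
        rw [hsplit]
        exact mul_le_mul_right (ENNReal.rpow_le_rpow hkey h1p) _
    _ = ENNReal.ofReal (r ^ α) * a⁻¹ ^ (1 / p) * J ^ (1 / p) *
          ((b⁻¹ * b) ^ (1 / p)) := by
        rw [ENNReal.mul_inv (Or.inl ha0) (Or.inl hat),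
          ENNReal.mul_rpow_of_nonneg _ _ h1p, ENNReal.mul_rpow_of_nonneg _ _ h1p,
          ENNReal.mul_rpow_of_nonneg _ _ h1p]
        ring
    _ = ENNReal.ofReal (r ^ α) * a⁻¹ ^ (1 / p) * J ^ (1 / p) := by
        rw [ENNReal.inv_mul_cancel hb0 hbt, ENNReal.one_rpow, mul_one]
    _ ≤ morreyNorm n α p w := by
        rw [morreyNorm]
        exact le_iSup_of_le c' (le_iSup_of_le r (le_iSup_of_le hr le_rfl))
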